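/- For orthogonal projectors P_L and P_R, any matrix ΔW_0 ∈ ℝ^{d_out×d_in}, and penalties λ_{LR̄}, λ_{L̄R}, λ_{L̄R̄} > −1, the minimizer of the objective f(ΔW) = (1/2)‖ΔW − ΔW_0‖_F² + (1/2)·(λ_{LR̄}‖Π_{LR̄}(ΔW)‖_F² + λ_{L̄R}‖Π_{L̄R}(ΔW)‖_F² + λ_{L̄R̄}‖Π_{L̄R̄}(ΔW)‖_F²) is unique: if f(X) ≤ f(Y) for all Y, then X = Π_{LR}(ΔW_0) + (1+λ_{LR̄})⁻¹ Π_{LR̄}(ΔW_0) + (1+λ_{L̄R})⁻¹ Π_{L̄R}(ΔW_0) + (1+λ_{L̄R̄})⁻¹ Π_{L̄R̄}(ΔW_0). -/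

import Mathlib

open Matrix

/-- Frobenius norm ‖X‖_F = sqrt(tr(Xᵀ X)). -/
noncomputable def frob {dout din : ℕ} (X : Matrix (Fin dout) (Fin din) ℝ) : ℝ :=
  Real.sqrt (Matrix.trace (Xᵀ * X))

/-- Fully aligned block Π_{LR}(X) = P_L X P_R. -/
def piLR {dout din : ℕ} (PL : Matrix (Fin dout) (Fin dout) ℝ)
    (PR : Matrix (Fin din) (Fin din) ℝ) (X : Matrix (Fin dout) (Fin din) ℝ) :
    Matrix (Fin dout) (Fin din) ℝ := PL * X * PR

/-- Mixed block Π_{LR̄}(X) = P_L X (I − P_R). -/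
def piLRc {dout din : ℕ} (PL : Matrix (Fin dout) (Fin dout) ℝ)
    (PR : Matrix (Fin din) (Fin din) ℝ) (X : Matrix (Fin dout) (Fin din) ℝ) :
    Matrix (Fin dout) (Fin din) ℝ := PL * X * (1 - PR)

/-- Mixed block Π_{L̄R}(X) = (I − P_L) X P_R. -/
def piLcR {dout din : ℕ} (PL : Matrix (Fin dout) (Fin dout) ℝ)
    (PR : Matrix (Fin din) (Fin din) ℝ) (X : Matrix (Fin dout) (Fin din) ℝ) :
    Matrix (Fin dout) (Fin din) ℝ := (1 - PL) * X * PR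

/-- Off-subspace block Π_{L̄R̄}(X) = (I − P_L) X (I − P_R). -/
def piLcRc {dout din : ℕ} (PL : Matrix (Fin dout) (Fin dout) ℝ)
    (PR : Matrix (Fin din) (Fin din) ℝ) (X : Matrix (Fin dout) (Fin din) ℝ) :
    Matrix (Fin dout) (Fin din) ℝ := (1 - PL) * X * (1 - PR)

/-- The CSULoRA objective
f(ΔW) = (1/2)‖ΔW − ΔW₀‖_F² + (1/2)(λ_{LR̄}‖Π_{LR̄}(ΔW)‖_F² + λ_{L̄R}‖Π_{L̄R}(ΔW)‖_F²
        + λ_{L̄R̄}‖Π_{L̄R̄}(ΔW)‖_F²). -/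
noncomputable def objf {dout din : ℕ} (PL : Matrix (Fin dout) (Fin dout) ℝ)
    (PR : Matrix (Fin din) (Fin din) ℝ) (ΔW₀ : Matrix (Fin dout) (Fin din) ℝ)
    (lLRc lLcR lLcRc : ℝ) (ΔW : Matrix (Fin dout) (Fin din) ℝ) : ℝ :=
  (1/2) * frob (ΔW - ΔW₀) ^ 2 +
    (1/2) * (lLRc * frob (piLRc PL PR ΔW) ^ 2 + lLcR * frob (piLcR PL PR ΔW) ^ 2 +
      lLcRc * frob (piLcRc PL PR ΔW) ^ 2)

/-- The CSULoRA closed-form corrected update ΔW_⋆. -/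
noncomputable def wstar {dout din : ℕ} (PL : Matrix (Fin dout) (Fin dout) ℝ)
    (PR : Matrix (Fin din) (Fin din) ℝ) (ΔW₀ : Matrix (Fin dout) (Fin din) ℝ)
    (lLRc lLcR lLcRc : ℝ) : Matrix (Fin dout) (Fin din) ℝ :=
  piLR PL PR ΔW₀ + (1 + lLRc)⁻¹ • piLRc PL PR ΔW₀ + (1 + lLcR)⁻¹ • piLcR PL PR ΔW₀ +
    (1 + lLcRc)⁻¹ • piLcRc PL PR ΔW₀

section Helpers
variable {dout din : ℕ}

noncomputable def inpr (A B : Matrix (Fin dout) (Fin din) ℝ) : ℝ := Matrix.trace (Aᵀ * B)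

lemma inpr_comm (A B : Matrix (Fin dout) (Fin din) ℝ) : inpr A B = inpr B A := by
  rw [inpr, inpr, ← Matrix.trace_transpose, Matrix.transpose_mul, Matrix.transpose_transpose]

lemma inpr_add_right (A B C : Matrix (Fin dout) (Fin din) ℝ) :
    inpr A (B + C) = inpr A B + inpr A C := by simp [inpr, Matrix.mul_add]

lemma inpr_smul_right (t : ℝ) (A B : Matrix (Fin dout) (Fin din) ℝ) :
    inpr A (t • B) = t * inpr A B := by simp [inpr, Matrix.mul_smul]

lemma inpr_add_left (A B C : Matrix (Fin dout) (Fin din) ℝ) :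
    inpr (A + B) C = inpr A C + inpr B C := by
  rw [inpr_comm, inpr_add_right, inpr_comm C A, inpr_comm C B]

lemma inpr_smul_left (t : ℝ) (A B : Matrix (Fin dout) (Fin din) ℝ) :
    inpr (t • A) B = t * inpr A B := by
  rw [inpr_comm, inpr_smul_right, inpr_comm]

lemma inpr_self (A : Matrix (Fin dout) (Fin din) ℝ) :
    inpr A A = ∑ j, ∑ i, (A i j)^2 := by
  simp [inpr, Matrix.trace, Matrix.mul_apply, Matrix.diag, sq]

lemma inpr_self_nonneg (A : Matrix (Fin dout) (Fin din) ℝ) : 0 ≤ inpr A A := by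
  rw [inpr_self]; positivity

lemma inpr_self_eq_zero {A : Matrix (Fin dout) (Fin din) ℝ} (h : inpr A A = 0) : A = 0 := by
  rw [inpr_self] at h
  ext i j
  have h1 := (Finset.sum_eq_zero_iff_of_nonneg (fun j _ => Finset.sum_nonneg
    (fun i _ => sq_nonneg (A i j)))).1 h j (Finset.mem_univ j)
  have h2 := (Finset.sum_eq_zero_iff_of_nonneg (fun i _ => sq_nonneg (A i j))).1 h1 i
    (Finset.mem_univ i)
  simpa using pow_eq_zero_iff (n := 2) (by norm_num) |>.1 h2

lemma frob_sq (A : Matrix (Fin dout) (Fin din) ℝ) : frob A ^ 2 = inpr A A := by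
  rw [frob]; exact Real.sq_sqrt (inpr_self_nonneg A)

lemma inpr_proj (Q1 : Matrix (Fin dout) (Fin dout) ℝ) (Q2 : Matrix (Fin din) (Fin din) ℝ)
    (h1 : Q1ᵀ = Q1) (h2 : Q2ᵀ = Q2) (A B : Matrix (Fin dout) (Fin din) ℝ) :
    inpr (Q1 * A * Q2) B = inpr A (Q1 * B * Q2) := by
  simp only [inpr, Matrix.transpose_mul, h1, h2]
  rw [Matrix.mul_assoc, Matrix.trace_mul_comm]
  simp only [Matrix.mul_assoc]

lemma inpr_proj_idem (Q1 : Matrix (Fin dout) (Fin dout) ℝ) (Q2 : Matrix (Fin din) (Fin din) ℝ)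
    (h1 : Q1ᵀ = Q1) (h1i : Q1 * Q1 = Q1) (h2 : Q2ᵀ = Q2) (h2i : Q2 * Q2 = Q2)
    (A B : Matrix (Fin dout) (Fin din) ℝ) :
    inpr (Q1 * A * Q2) (Q1 * B * Q2) = inpr (Q1 * A * Q2) B := by
  have idemL : ∀ M : Matrix (Fin dout) (Fin din) ℝ, Q1 * (Q1 * M) = Q1 * M := fun M => by
    rw [← Matrix.mul_assoc, h1i]
  rw [inpr_proj Q1 Q2 h1 h2]
  rw [show Q1 * (Q1 * B * Q2) * Q2 = Q1 * B * Q2 by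
    simp only [Matrix.mul_assoc, idemL, h2i]]
  rw [← inpr_proj Q1 Q2 h1 h2]

lemma inpr_expand (t : ℝ) (A B : Matrix (Fin dout) (Fin din) ℝ) :
    inpr (A + t • B) (A + t • B) = inpr A A + 2 * t * inpr A B + t^2 * inpr B B := by
  rw [inpr_add_left, inpr_add_right, inpr_add_right, inpr_smul_left, inpr_smul_right,
    inpr_smul_left, inpr_smul_right, inpr_comm B A]
  ring

lemma quad_zero {a b : ℝ} (h : ∀ t : ℝ, 0 ≤ a * t^2 + b * t) : b = 0 := by
  by_contra hb
  have ht := h (-b/(|a|+1))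
  have ha : (0:ℝ) < |a| + 1 := by positivity
  have hab : a ≤ |a| := le_abs_self a
  have hb2 : 0 < b^2 := by positivity
  rw [div_pow, neg_sq] at ht
  have e : a * (b ^ 2 / (|a| + 1) ^ 2) + b * (-b / (|a| + 1))
      = (a * b^2 + (-b^2) * (|a|+1)) / (|a|+1)^2 := by field_simp
  rw [e, le_div_iff₀ (by positivity)] at ht
  nlinarith [hb2, hab]
end Helpers

/-- the minimizer of the CSULoRA objective is unique and equals ΔW_⋆. -/
theorem csulora_minimizer_unique {dout din : ℕ}
    (PL : Matrix (Fin dout) (Fin dout) ℝ) (PR : Matrix (Fin din) (Fin din) ℝ)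
    (hPLs : PLᵀ = PL) (hPLi : PL * PL = PL)
    (hPRs : PRᵀ = PR) (hPRi : PR * PR = PR)
    (ΔW₀ : Matrix (Fin dout) (Fin din) ℝ)
    (lLRc lLcR lLcRc : ℝ)
    (h1 : -1 < lLRc) (h2 : -1 < lLcR) (h3 : -1 < lLcRc)
    (X : Matrix (Fin dout) (Fin din) ℝ)
    (hmin : ∀ Y : Matrix (Fin dout) (Fin din) ℝ,
      objf PL PR ΔW₀ lLRc lLcR lLcRc X ≤ objf PL PR ΔW₀ lLRc lLcR lLcRc Y) :
    X = wstar PL PR ΔW₀ lLRc lLcR lLcRc := by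
  have hn1 : (1 + lLRc) ≠ 0 := by linarith
  have hn2 : (1 + lLcR) ≠ 0 := by linarith
  have hn3 : (1 + lLcRc) ≠ 0 := by linarith
  have hPLs' : (1 - PL)ᵀ = 1 - PL := by simp [transpose_sub, hPLs]
  have hPLi' : (1 - PL) * (1 - PL) = 1 - PL := by
    simp [Matrix.mul_sub, Matrix.sub_mul, hPLi]
  have hPRs' : (1 - PR)ᵀ = 1 - PR := by simp [transpose_sub, hPRs]
  have hPRi' : (1 - PR) * (1 - PR) = 1 - PR := by
    simp [Matrix.mul_sub, Matrix.sub_mul, hPRi]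
  set G := (X - ΔW₀) + lLRc • (PL * X * (1 - PR)) + lLcR • ((1 - PL) * X * PR)
      + lLcRc • ((1 - PL) * X * (1 - PR)) with hGdef
  -- quadratic expansion
  have hexp : ∀ (D : Matrix (Fin dout) (Fin din) ℝ) (t : ℝ),
      objf PL PR ΔW₀ lLRc lLcR lLcRc (X + t • D)
        = objf PL PR ΔW₀ lLRc lLcR lLcRc X + t * inpr G D
          + t^2 * ((1/2) * (inpr D D + lLRc * inpr (PL * D * (1 - PR)) D
            + lLcR * inpr ((1 - PL) * D * PR) D
            + lLcRc * inpr ((1 - PL) * D * (1 - PR)) D)) := by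
    intro D t
    have p1 : PL * (X + t • D) * (1 - PR) = PL * X * (1 - PR) + t • (PL * D * (1 - PR)) := by
      simp [Matrix.mul_add, Matrix.add_mul, Matrix.mul_smul, Matrix.smul_mul]
    have p2 : (1 - PL) * (X + t • D) * PR = (1 - PL) * X * PR + t • ((1 - PL) * D * PR) := by
      simp [Matrix.mul_add, Matrix.add_mul, Matrix.mul_smul, Matrix.smul_mul]
    have p3 : (1 - PL) * (X + t • D) * (1 - PR)
        = (1 - PL) * X * (1 - PR) + t • ((1 - PL) * D * (1 - PR)) := by
      simp [Matrix.mul_add, Matrix.add_mul, Matrix.mul_smul, Matrix.smul_mul]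
    have p0 : X + t • D - ΔW₀ = (X - ΔW₀) + t • D := by abel
    simp only [objf, piLRc, piLcR, piLcRc, frob_sq, p0, p1, p2, p3, inpr_expand]
    rw [hGdef]
    simp only [inpr_add_left, inpr_smul_left]
    simp only [inpr_proj_idem PL (1 - PR) hPLs hPLi hPRs' hPRi',
        inpr_proj_idem (1 - PL) PR hPLs' hPLi' hPRs hPRi,
        inpr_proj_idem (1 - PL) (1 - PR) hPLs' hPLi' hPRs' hPRi']
    ring
  -- gradient vanishes
  have hD : ∀ D : Matrix (Fin dout) (Fin din) ℝ, inpr G D = 0 := by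
    intro D
    apply quad_zero (a := (1/2) * (inpr D D + lLRc * inpr (PL * D * (1 - PR)) D
            + lLcR * inpr ((1 - PL) * D * PR) D
            + lLcRc * inpr ((1 - PL) * D * (1 - PR)) D))
    intro t
    have hm := hmin (X + t • D)
    rw [hexp D t] at hm
    linarith
  have hG0 : G = 0 := inpr_self_eq_zero (hD G)
  -- block equations
  have zRL : (1 - PR) * PR = 0 := by simp [Matrix.sub_mul, hPRi]
  have zLR : PR * (1 - PR) = 0 := by simp [Matrix.mul_sub, hPRi]
  have zL1 : (1 - PL) * PL = 0 := by simp [Matrix.sub_mul, hPLi]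
  have zL2 : PL * (1 - PL) = 0 := by simp [Matrix.mul_sub, hPLi]
  have idemPL : ∀ M : Matrix (Fin dout) (Fin din) ℝ, PL * (PL * M) = PL * M := fun M => by
    rw [← Matrix.mul_assoc, hPLi]
  have idemPL' : ∀ M : Matrix (Fin dout) (Fin din) ℝ, (1 - PL) * ((1 - PL) * M) = (1 - PL) * M :=
    fun M => by rw [← Matrix.mul_assoc, hPLi']
  have zPL' : ∀ M : Matrix (Fin dout) (Fin din) ℝ, PL * ((1 - PL) * M) = 0 := fun M => by
    rw [← Matrix.mul_assoc, zL2, Matrix.zero_mul]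
  have zPL'' : ∀ M : Matrix (Fin dout) (Fin din) ℝ, (1 - PL) * (PL * M) = 0 := fun M => by
    rw [← Matrix.mul_assoc, zL1, Matrix.zero_mul]
  have e00 := congrArg (fun M => PL * M * PR) hG0
  simp only [hGdef, Matrix.add_mul, Matrix.mul_add, Matrix.sub_mul, Matrix.mul_sub,
    Matrix.smul_mul, Matrix.mul_smul, Matrix.mul_assoc, zRL, zLR, hPRi, hPRi',
    idemPL, idemPL', zPL', zPL'', Matrix.mul_zero, Matrix.zero_mul, smul_zero,
    add_zero, zero_add, Matrix.mul_one, Matrix.one_mul] at e00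
  have e01 := congrArg (fun M => PL * M * (1 - PR)) hG0
  simp only [hGdef, Matrix.add_mul, Matrix.mul_add, Matrix.sub_mul, Matrix.mul_sub,
    Matrix.smul_mul, Matrix.mul_smul, Matrix.mul_assoc, zRL, zLR, hPRi, hPRi',
    idemPL, idemPL', zPL', zPL'', Matrix.mul_zero, Matrix.zero_mul, smul_zero,
    add_zero, zero_add, Matrix.mul_one, Matrix.one_mul] at e01
  have e10 := congrArg (fun M => (1 - PL) * M * PR) hG0
  simp only [hGdef, Matrix.add_mul, Matrix.mul_add, Matrix.sub_mul, Matrix.mul_sub,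
    Matrix.smul_mul, Matrix.mul_smul, Matrix.mul_assoc, zRL, zLR, hPRi, hPRi',
    idemPL, idemPL', zPL', zPL'', Matrix.mul_zero, Matrix.zero_mul, smul_zero,
    add_zero, zero_add, Matrix.mul_one, Matrix.one_mul] at e10
  have e11 := congrArg (fun M => (1 - PL) * M * (1 - PR)) hG0
  simp only [hGdef, Matrix.add_mul, Matrix.mul_add, Matrix.sub_mul, Matrix.mul_sub,
    Matrix.smul_mul, Matrix.mul_smul, Matrix.mul_assoc, zRL, zLR, hPRi, hPRi',
    idemPL, idemPL', zPL', zPL'', Matrix.mul_zero, Matrix.zero_mul, smul_zero,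
    add_zero, zero_add, Matrix.mul_one, Matrix.one_mul] at e11
  have f00 : PL * X * PR = PL * ΔW₀ * PR := by
    simp only [Matrix.mul_assoc]
    linear_combination (norm := module) e00
  have f01 : (1 + lLRc) • (PL * X * (1 - PR)) = PL * ΔW₀ * (1 - PR) := by
    simp only [Matrix.mul_sub, Matrix.mul_one, Matrix.mul_assoc]
    linear_combination (norm := module) e01
  have f10 : (1 + lLcR) • ((1 - PL) * X * PR) = (1 - PL) * ΔW₀ * PR := by
    simp only [Matrix.sub_mul, Matrix.one_mul, Matrix.mul_assoc]
    linear_combination (norm := module) e10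
  have f11 : (1 + lLcRc) • ((1 - PL) * X * (1 - PR)) = (1 - PL) * ΔW₀ * (1 - PR) := by
    simp only [Matrix.sub_mul, Matrix.mul_sub, Matrix.one_mul, Matrix.mul_one, Matrix.mul_assoc]
    linear_combination (norm := module) e11
  have g01 : PL * X * (1 - PR) = (1 + lLRc)⁻¹ • (PL * ΔW₀ * (1 - PR)) := by
    rw [← f01, smul_smul, inv_mul_cancel₀ hn1, one_smul]
  have g10 : (1 - PL) * X * PR = (1 + lLcR)⁻¹ • ((1 - PL) * ΔW₀ * PR) := by
    rw [← f10, smul_smul, inv_mul_cancel₀ hn2, one_smul]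
  have g11 : (1 - PL) * X * (1 - PR) = (1 + lLcRc)⁻¹ • ((1 - PL) * ΔW₀ * (1 - PR)) := by
    rw [← f11, smul_smul, inv_mul_cancel₀ hn3, one_smul]
  rw [wstar, piLR, piLRc, piLcR, piLcRc, ← f00, ← g01, ← g10, ← g11]
  simp only [Matrix.mul_sub, Matrix.sub_mul, Matrix.mul_one, Matrix.one_mul]
  abel
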